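/- Let s₀, s, r, ω ∈ ℝ with ω ≠ 0 and s₀ ≠ 0, and let y ∈ ℝ³ with y ≠ S and y ≠ R, where S = (s₀, 0, s) and R = (0, 0, r); set A = ‖y−S‖, B = ‖y−R‖. Then the determinant of the 3×3 matrix with rows ((y₁−s₀)/A + y₁/B, y₂/A + y₂/B, (y₃−s)/A + (y₃−r)/B), (−(y₃−s)(y₁−s₀)ω/A³, −(y₃−s)y₂ω/A³, ((y₁−s₀)²+y₂²)ω/A³), (−(y₃−r)y₁ω/B³, −(y₃−r)y₂ω/B³, (y₁²+y₂²)ω/B³) vanishes if and only if y₂ = 0 or (y₃−s)/A + (y₃−r)/B = 0. -/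

import Mathlib

/-- Characterization of the critical set of the left projection `π_L` for the
crosswell geometry: the Jacobian determinant vanishes iff `y₂ = 0` (the surface `Σ¹`)
or `(y₃−s)/A + (y₃−r)/B = 0` (the surface `Σ²`). -/
theorem crosswell_det_dpiL_eq_zero_iff
    (s₀ s r ω : ℝ) (hω : ω ≠ 0) (hs₀ : s₀ ≠ 0) (y S R : EuclideanSpace ℝ (Fin 3))
    (hS : S = ![s₀, 0, s]) (hR : R = ![0, 0, r])
    (hyS : y ≠ S) (hyR : y ≠ R)
    (A B : ℝ) (hA : A = ‖y - S‖) (hB : B = ‖y - R‖) :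
    (!![(y 0 - s₀) / A + y 0 / B,
        y 1 / A + y 1 / B,
        (y 2 - s) / A + (y 2 - r) / B;
        -((y 2 - s) * (y 0 - s₀)) * ω / A ^ 3,
        -((y 2 - s) * y 1) * ω / A ^ 3,
        ((y 0 - s₀) ^ 2 + (y 1) ^ 2) * ω / A ^ 3;
        -((y 2 - r) * y 0) * ω / B ^ 3,
        -((y 2 - r) * y 1) * ω / B ^ 3,
        ((y 0) ^ 2 + (y 1) ^ 2) * ω / B ^ 3]).det = 0
      ↔ y 1 = 0 ∨ (y 2 - s) / A + (y 2 - r) / B = 0 := by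
  have hApos : 0 < A := by rw [hA, norm_sub_pos_iff]; exact hyS
  have hBpos : 0 < B := by rw [hB, norm_sub_pos_iff]; exact hyR
  have hA0 : A ≠ 0 := hApos.ne'
  have hB0 : B ≠ 0 := hBpos.ne'
  have hA2 : A ^ 2 = (y 0 - s₀) ^ 2 + (y 1) ^ 2 + (y 2 - s) ^ 2 := by
    rw [hA, EuclideanSpace.norm_eq, Real.sq_sqrt (by positivity)]
    simp [Fin.sum_univ_three, hS, sub_eq_add_neg]
  have hB2 : B ^ 2 = (y 0) ^ 2 + (y 1) ^ 2 + (y 2 - r) ^ 2 := by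
    rw [hB, EuclideanSpace.norm_eq, Real.sq_sqrt (by positivity)]
    simp [Fin.sum_univ_three, hR, sub_eq_add_neg]
  have step1 : (!![(y 0 - s₀) / A + y 0 / B,
        y 1 / A + y 1 / B,
        (y 2 - s) / A + (y 2 - r) / B;
        -((y 2 - s) * (y 0 - s₀)) * ω / A ^ 3,
        -((y 2 - s) * y 1) * ω / A ^ 3,
        ((y 0 - s₀) ^ 2 + (y 1) ^ 2) * ω / A ^ 3;
        -((y 2 - r) * y 0) * ω / B ^ 3,
        -((y 2 - r) * y 1) * ω / B ^ 3,
        ((y 0) ^ 2 + (y 1) ^ 2) * ω / B ^ 3]).det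
      = ω ^ 2 * (-(s₀ * y 1)) *
          (((y 0 - s₀) ^ 2 + (y 1) ^ 2 + (y 2 - s) ^ 2) * (y 2 - r) * B
            + ((y 0) ^ 2 + (y 1) ^ 2 + (y 2 - r) ^ 2) * (y 2 - s) * A) / (A ^ 4 * B ^ 4) := by
    rw [Matrix.det_fin_three]
    simp only [Matrix.of_apply, Matrix.cons_val', Matrix.cons_val_zero, Matrix.cons_val_one,
      Matrix.head_cons, Matrix.empty_val', Matrix.cons_val_fin_one, Matrix.head_fin_const,
      Matrix.cons_val_two, Matrix.tail_cons]
    field_simp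
    ring
  have key : (!![(y 0 - s₀) / A + y 0 / B,
        y 1 / A + y 1 / B,
        (y 2 - s) / A + (y 2 - r) / B;
        -((y 2 - s) * (y 0 - s₀)) * ω / A ^ 3,
        -((y 2 - s) * y 1) * ω / A ^ 3,
        ((y 0 - s₀) ^ 2 + (y 1) ^ 2) * ω / A ^ 3;
        -((y 2 - r) * y 0) * ω / B ^ 3,
        -((y 2 - r) * y 1) * ω / B ^ 3,
        ((y 0) ^ 2 + (y 1) ^ 2) * ω / B ^ 3]).det
      = (-(s₀ * ω ^ 2)) * (y 1 * ((y 2 - s) / A + (y 2 - r) / B)) / (A ^ 2 * B ^ 2) := by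
    rw [step1, ← hA2, ← hB2]
    field_simp
    ring
  rw [key]
  rw [div_eq_zero_iff]
  constructor
  · rintro (h | h)
    · rcases mul_eq_zero.mp h with h' | h'
      · exact absurd h' (neg_ne_zero.mpr (mul_ne_zero hs₀ (pow_ne_zero _ hω)))
      · rcases mul_eq_zero.mp h' with h'' | h''
        · exact Or.inl h''
        · exact Or.inr h''
    · exact absurd h (by positivity)
  · rintro (h | h) <;> left
    · rw [h]; ring
    · rw [h]; ring
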